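/- Firing probability after at least m failures: Let μ ∈ (0,1), w > 0, γ = w/(1−μ), and let v : {1,…,N} → ℝ satisfy v(1) = 0 and (1 − μ^{i−1})·γ ≤ v(i) ≤ γ for all i. Let k ∈ ℕ be such that μ^k γ ≤ 1. Then μ^k γ (1 − (1/N)(1−μ^N)/(1−μ)) ≤ (1/N) Σ_{i=1}^{N} φ(μ^k v(i)) ≤ μ^k γ (1 − 1/N). In particular the one-step firing probability after k consecutive leakage steps from the metastable basin decays proportionally to μ^k. -/

import Mathlib

/-- The firing probability function: `φ(u) = min(u,1)` for `u ≥ 0` and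
`φ(u) = 0` for `u ≤ 0`. -/
noncomputable def phi (u : ℝ) : ℝ := min (max u 0) 1

/-- Firing probability after at least `m` failures.  Let
`γ = w/(1−μ)`, let `v : Fin N → ℝ` (0-based) satisfy `v 0 = 0` and
`(1 − μ^i) γ ≤ v i ≤ γ` for all `i`, and let `k ∈ ℕ` with `μ^k γ ≤ 1`.  Then
`μ^k γ (1 − (1/N)(1−μ^N)/(1−μ)) ≤ (1/N) Σ_i φ(μ^k v i) ≤ μ^k γ (1 − 1/N)`. -/
theorem firing_prob_after_m_failures (N : ℕ) (hN : 2 ≤ N) (μ w : ℝ)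
    (hμ0 : 0 < μ) (hμ1 : μ < 1) (hw : 0 < w)
    (v : Fin N → ℝ)
    (hv0 : v ⟨0, by omega⟩ = 0)
    (hv : ∀ i : Fin N,
      (1 - μ ^ (i : ℕ)) * (w / (1 - μ)) ≤ v i ∧ v i ≤ w / (1 - μ))
    (k : ℕ) (hk : μ ^ k * (w / (1 - μ)) ≤ 1) :
    μ ^ k * (w / (1 - μ)) * (1 - (1 / (N : ℝ)) * (1 - μ ^ N) / (1 - μ))
        ≤ (1 / (N : ℝ)) * ∑ i, phi (μ ^ k * v i) ∧
    (1 / (N : ℝ)) * ∑ i, phi (μ ^ k * v i)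
        ≤ μ ^ k * (w / (1 - μ)) * (1 - 1 / (N : ℝ)) := by
  have h1μ : (0:ℝ) < 1 - μ := by linarith
  have hγ : 0 < w / (1 - μ) := div_pos hw h1μ
  have hk0 : (0:ℝ) < μ ^ k := pow_pos hμ0 k
  have hNpos : (0:ℝ) < (N:ℝ) := by positivity
  have hvnn : ∀ i : Fin N, 0 ≤ v i := by
    intro i
    refine le_trans ?_ (hv i).1
    have : μ ^ (i:ℕ) ≤ 1 := pow_le_one₀ hμ0.le hμ1.le
    nlinarith
  have hphi : ∀ i : Fin N, phi (μ ^ k * v i) = μ ^ k * v i := by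
    intro i
    have h1 : 0 ≤ μ ^ k * v i := mul_nonneg hk0.le (hvnn i)
    have h2 : μ ^ k * v i ≤ 1 := by
      refine le_trans ?_ hk
      exact mul_le_mul_of_nonneg_left (hv i).2 hk0.le
    unfold phi
    rw [max_eq_left h1, min_eq_left h2]
  have hsum : ∑ i, phi (μ ^ k * v i) = μ ^ k * ∑ i, v i := by
    rw [Finset.mul_sum]
    exact Finset.sum_congr rfl fun i _ => hphi i
  have hG : ∑ i : Fin N, μ ^ (i:ℕ) = (1 - μ ^ N) / (1 - μ) := by
    rw [Fin.sum_univ_eq_sum_range (fun i => μ ^ i), geom_sum_eq hμ1.ne,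
      div_eq_div_iff (by linarith) (by linarith : (0:ℝ) < 1 - μ).ne']
    ring
  have hlow : ((N:ℝ) - (1 - μ ^ N) / (1 - μ)) * (w / (1 - μ)) ≤ ∑ i, v i := by
    have h := Finset.sum_le_sum (fun i (_ : i ∈ Finset.univ) => (hv i).1)
    calc ((N:ℝ) - (1 - μ ^ N) / (1 - μ)) * (w / (1 - μ))
        = ∑ i : Fin N, (1 - μ ^ (i:ℕ)) * (w / (1 - μ)) := by
          rw [← Finset.sum_mul, Finset.sum_sub_distrib, hG]
          simp [Finset.card_univ]
      _ ≤ ∑ i, v i := h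
  have hup : ∑ i, v i ≤ ((N:ℝ) - 1) * (w / (1 - μ)) := by
    have h0 : (⟨0, by omega⟩ : Fin N) ∈ Finset.univ := Finset.mem_univ _
    rw [← Finset.add_sum_erase _ v h0, hv0, zero_add]
    have h := Finset.sum_le_card_nsmul (Finset.univ.erase (⟨0, by omega⟩ : Fin N)) v
      (w / (1 - μ)) (fun i _ => (hv i).2)
    rw [Finset.card_erase_of_mem h0, Finset.card_univ, Fintype.card_fin,
      nsmul_eq_mul] at h
    refine h.trans_eq ?_
    have : ((N - 1 : ℕ) : ℝ) = (N:ℝ) - 1 := by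
      push_cast [Nat.cast_sub (by omega : 1 ≤ N)]; ring
    rw [this]
  rw [hsum]
  constructor
  · have key : μ ^ k * (((N:ℝ) - (1 - μ ^ N) / (1 - μ)) * (w / (1 - μ)))
        ≤ μ ^ k * ∑ i, v i := mul_le_mul_of_nonneg_left hlow hk0.le
    have heq : μ ^ k * (w / (1 - μ)) * (1 - (1 / (N : ℝ)) * (1 - μ ^ N) / (1 - μ))
        = (1 / (N:ℝ)) * (μ ^ k * (((N:ℝ) - (1 - μ ^ N) / (1 - μ)) * (w / (1 - μ)))) := by
      field_simp
    rw [heq]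
    exact mul_le_mul_of_nonneg_left key (by positivity)
  · have key : μ ^ k * ∑ i, v i ≤ μ ^ k * (((N:ℝ) - 1) * (w / (1 - μ))) :=
      mul_le_mul_of_nonneg_left hup hk0.le
    have heq : μ ^ k * (w / (1 - μ)) * (1 - 1 / (N : ℝ))
        = (1 / (N:ℝ)) * (μ ^ k * (((N:ℝ) - 1) * (w / (1 - μ)))) := by
      field_simp
    rw [heq]
    exact mul_le_mul_of_nonneg_left key (by positivity)
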